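/- A family S = (S_1, …, S_s) of subsets of [N] is (N,k)-strongly-selective if for every nonempty Z ⊆ [N] with |Z| ≤ k and every z ∈ Z there is an index i with S_i ∩ Z = {z}. For every 2 ≤ k ≤ N there exists an (N,k)-strongly-selective family of size O(k² log N); more precisely, of size at most C·k²·log N for some absolute constant C. -/

import Mathlib

open Finset

namespace SSFaux

variable {N k : ℕ}

/-- The set of "good" colorings for a pair `(Z, z)`. -/
def good (hk : 0 < k) (Z : Finset (Fin N)) (z : Fin N) : Finset (Fin N → Fin k) :=
  Fintype.piFinset (fun x : Fin N =>
    if x = z then {(⟨0, hk⟩ : Fin k)}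
    else if x ∈ Z then ({⟨0, hk⟩} : Finset (Fin k))ᶜ else Finset.univ)

lemma mem_good_iff (hk : 0 < k) {Z : Finset (Fin N)} {z : Fin N} (hz : z ∈ Z)
    {f : Fin N → Fin k} :
    f ∈ good hk Z z ↔ (univ.filter fun x => f x = ⟨0, hk⟩) ∩ Z = {z} := by
  simp only [good, Fintype.mem_piFinset]
  constructor
  · intro h
    ext x
    simp only [mem_inter, mem_filter, mem_univ, true_and, mem_singleton]
    constructor
    · rintro ⟨hf0, hxZ⟩
      by_contra hne
      have := h x
      rw [if_neg hne, if_pos hxZ] at this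
      simp only [mem_compl, mem_singleton] at this
      exact this hf0
    · rintro rfl
      have := h x
      rw [if_pos rfl] at this
      simp only [mem_singleton] at this
      exact ⟨this, hz⟩
  · intro h x
    by_cases hxz : x = z
    · subst hxz
      have : x ∈ (univ.filter fun y => f y = ⟨0, hk⟩) ∩ Z := by
        rw [h]; exact mem_singleton_self x
      simp only [mem_inter, mem_filter, mem_univ, true_and] at this
      rw [if_pos rfl, mem_singleton]
      exact this.1
    · rw [if_neg hxz]
      by_cases hxZ : x ∈ Z
      · rw [if_pos hxZ]
        simp only [mem_compl, mem_singleton]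
        intro hf0
        have : x ∈ (univ.filter fun y => f y = ⟨0, hk⟩) ∩ Z := by
          simp only [mem_inter, mem_filter, mem_univ, true_and]
          exact ⟨hf0, hxZ⟩
        rw [h, mem_singleton] at this
        exact hxz this
      · rw [if_neg hxZ]; exact mem_univ _

lemma card_good (hk : 0 < k) {Z : Finset (Fin N)} {z : Fin N} (hz : z ∈ Z) :
    (good hk Z z).card = (k - 1) ^ (Z.card - 1) * k ^ (N - Z.card) := by
  rw [good, Fintype.card_piFinset]
  have hcount : ∀ x : Fin N,
      ((if x = z then {(⟨0, hk⟩ : Fin k)}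
        else if x ∈ Z then ({⟨0, hk⟩} : Finset (Fin k))ᶜ else Finset.univ)).card
      = if x = z then 1 else if x ∈ Z then k - 1 else k := by
    intro x
    by_cases h1 : x = z
    · simp [h1]
    · by_cases h2 : x ∈ Z <;> simp [h1, h2, card_compl]
  rw [Finset.prod_congr rfl (fun x _ => hcount x)]
  rw [← Finset.prod_sdiff (Finset.subset_univ Z)]
  have h1 : ∏ x ∈ univ \ Z, (if x = z then 1 else if x ∈ Z then k - 1 else k)
      = k ^ (N - Z.card) := by
    rw [Finset.prod_congr rfl (fun x hx => ?_), Finset.prod_const,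
      Finset.card_sdiff_of_subset (Finset.subset_univ Z), Finset.card_univ, Fintype.card_fin]
    simp only [mem_sdiff, mem_univ, true_and] at hx
    rw [if_neg (by rintro rfl; exact hx hz), if_neg hx]
  have h2 : ∏ x ∈ Z, (if x = z then 1 else if x ∈ Z then k - 1 else k)
      = (k - 1) ^ (Z.card - 1) := by
    rw [← Finset.mul_prod_erase Z _ hz, if_pos rfl, one_mul]
    rw [Finset.prod_congr rfl (fun x hx => ?_), Finset.prod_const, Finset.card_erase_of_mem hz]
    rw [if_neg (Finset.ne_of_mem_erase hx), if_pos (Finset.mem_of_mem_erase hx)]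
  rw [h1, h2, mul_comm]

lemma good_card_lower (hk : 0 < k) (hkN : k ≤ N) {Z : Finset (Fin N)} {z : Fin N}
    (hz : z ∈ Z) (hZk : Z.card ≤ k) :
    (k - 1) ^ (k - 1) * k ^ (N - k) ≤ (good hk Z z).card := by
  rw [card_good hk hz]
  have hj1 : 1 ≤ Z.card := Finset.card_pos.2 ⟨z, hz⟩
  have e1 : k ^ (N - Z.card) = k ^ (k - Z.card) * k ^ (N - k) := by
    rw [← pow_add]; congr 1; omega
  have e2 : (k - 1) ^ (k - 1) = (k - 1) ^ (Z.card - 1) * (k - 1) ^ (k - Z.card) := by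
    rw [← pow_add]; congr 1; omega
  rw [e1, e2, mul_assoc]
  gcongr
  omega

/-- The collection of pairs `(Z, z)` with `|Z| ≤ k`, `z ∈ Z`. -/
def pairs (N k : ℕ) : Finset (Σ _ : Finset (Fin N), Fin N) :=
  (univ.filter (fun Z : Finset (Fin N) => Z.card ≤ k)).sigma (fun Z => Z)

lemma mem_pairs {Z : Finset (Fin N)} {z : Fin N} (hZk : Z.card ≤ k) (hz : z ∈ Z) :
    (⟨Z, z⟩ : Σ _ : Finset (Fin N), Fin N) ∈ pairs N k := by
  simp [pairs, Finset.mem_sigma, hZk, hz]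

lemma card_pairs_le (hk : 0 < k) (hkN : k ≤ N) (hN : 2 ≤ N) :
    (pairs N k).card ≤ N ^ (k + 3) := by
  have h1 : (pairs N k).card ≤ k * (univ.filter (fun Z : Finset (Fin N) => Z.card ≤ k)).card := by
    rw [pairs, Finset.card_sigma]
    calc ∑ Z ∈ univ.filter (fun Z : Finset (Fin N) => Z.card ≤ k), Z.card
        ≤ ∑ _Z ∈ univ.filter (fun Z : Finset (Fin N) => Z.card ≤ k), k := by
          apply Finset.sum_le_sum
          intro Z hZ
          exact (Finset.mem_filter.1 hZ).2
      _ = _ := by rw [Finset.sum_const, smul_eq_mul, mul_comm]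
  have h2 : (univ.filter (fun Z : Finset (Fin N) => Z.card ≤ k)).card ≤ (k + 1) * N ^ k := by
    have hsub : (univ.filter (fun Z : Finset (Fin N) => Z.card ≤ k))
        ⊆ (Finset.range (k + 1)).biUnion (fun j => Finset.powersetCard j univ) := by
      intro Z hZ
      simp only [Finset.mem_biUnion, Finset.mem_range, Finset.mem_powersetCard]
      exact ⟨Z.card, Nat.lt_succ_of_le (Finset.mem_filter.1 hZ).2, Finset.subset_univ _, rfl⟩
    calc (univ.filter (fun Z : Finset (Fin N) => Z.card ≤ k)).card
        ≤ ((Finset.range (k + 1)).biUnion (fun j => Finset.powersetCard j univ)).card :=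
          Finset.card_le_card hsub
      _ ≤ ∑ j ∈ Finset.range (k + 1), (Finset.powersetCard j (univ : Finset (Fin N))).card :=
          Finset.card_biUnion_le
      _ ≤ ∑ _j ∈ Finset.range (k + 1), N ^ k := by
          apply Finset.sum_le_sum
          intro j hj
          rw [Finset.card_powersetCard, Finset.card_univ, Fintype.card_fin]
          calc N.choose j ≤ N ^ j := Nat.choose_le_pow N j
            _ ≤ N ^ k := Nat.pow_le_pow_right (by omega) (by
                simp only [Finset.mem_range] at hj; omega)
      _ = (k + 1) * N ^ k := by rw [Finset.sum_const, Finset.card_range, smul_eq_mul]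
  calc (pairs N k).card ≤ k * ((k + 1) * N ^ k) := le_trans h1 (Nat.mul_le_mul le_rfl h2)
    _ = (k * (k + 1)) * N ^ k := by ring
    _ ≤ N ^ 3 * N ^ k := by
        apply Nat.mul_le_mul _ le_rfl
        calc k * (k + 1) ≤ N * (N + 1) := Nat.mul_le_mul hkN (by omega)
          _ ≤ N * (N * N) := Nat.mul_le_mul le_rfl (by nlinarith)
          _ = N ^ 3 := by ring
    _ = N ^ (k + 3) := by ring

lemma counting (hk : 0 < k) (hkN : k ≤ N) {s : ℕ}
    (H : (pairs N k).card * (k ^ N - (k - 1) ^ (k - 1) * k ^ (N - k)) ^ s < (k ^ N) ^ s) :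
    ∃ ω : Fin s → Fin N → Fin k, ∀ Z : Finset (Fin N), Z.card ≤ k → ∀ z ∈ Z,
      ∃ i : Fin s, (univ.filter fun x => ω i x = ⟨0, hk⟩) ∩ Z = {z} := by
  classical
  set Bad : Finset (Fin s → Fin N → Fin k) :=
    (pairs N k).biUnion (fun q => Fintype.piFinset (fun _ : Fin s => (good hk q.1 q.2)ᶜ))
    with hBad
  have hcard : Bad.card < (univ : Finset (Fin s → Fin N → Fin k)).card := by
    have hb : Bad.card ≤ (pairs N k).card *
        (k ^ N - (k - 1) ^ (k - 1) * k ^ (N - k)) ^ s := by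
      calc Bad.card ≤ ∑ q ∈ pairs N k,
            (Fintype.piFinset (fun _ : Fin s => (good hk q.1 q.2)ᶜ)).card :=
          Finset.card_biUnion_le
        _ ≤ ∑ _q ∈ pairs N k, (k ^ N - (k - 1) ^ (k - 1) * k ^ (N - k)) ^ s := by
            apply Finset.sum_le_sum
            intro q hq
            rw [Fintype.card_piFinset]
            simp only [Finset.prod_const, Finset.card_univ, Fintype.card_fin]
            apply Nat.pow_le_pow_left
            rw [Finset.card_compl]
            have hqm : q.2 ∈ q.1 ∧ q.1.card ≤ k := by
              have := Finset.mem_sigma.1 hq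
              exact ⟨this.2, (Finset.mem_filter.1 this.1).2⟩
            have hlow := good_card_lower hk hkN hqm.1 hqm.2
            have hfc : Fintype.card (Fin N → Fin k) = k ^ N := by
              simp [Fintype.card_fun]
            rw [hfc]
            omega
        _ = (pairs N k).card * (k ^ N - (k - 1) ^ (k - 1) * k ^ (N - k)) ^ s := by
            rw [Finset.sum_const, smul_eq_mul]
    calc Bad.card ≤ _ := hb
      _ < (k ^ N) ^ s := H
      _ = (univ : Finset (Fin s → Fin N → Fin k)).card := by
          rw [Finset.card_univ, Fintype.card_fun, Fintype.card_fun, Fintype.card_fin,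
            Fintype.card_fin, Fintype.card_fin]
  obtain ⟨ω, hω⟩ : ∃ ω, ω ∉ Bad := by
    by_contra hc
    push_neg at hc
    have : Bad = univ := Finset.eq_univ_iff_forall.2 hc
    rw [this] at hcard
    exact lt_irrefl _ hcard
  refine ⟨ω, fun Z hZk z hz => ?_⟩
  have hnot : ω ∉ Fintype.piFinset (fun _ : Fin s => (good hk Z z)ᶜ) := by
    intro hmem
    exact hω (Finset.mem_biUnion.2 ⟨⟨Z, z⟩, mem_pairs hZk hz, hmem⟩)
  rw [Fintype.mem_piFinset] at hnot
  push_neg at hnot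
  obtain ⟨i, hi⟩ := hnot
  rw [Finset.mem_compl, not_not] at hi
  exact ⟨i, (mem_good_iff hk hz).1 hi⟩
lemma numeric (hk2 : 2 ≤ k) (hkN : k ≤ N) {s : ℕ}
    (hs : 9 * (k : ℝ) ^ 2 * Real.log N ≤ (s : ℝ)) :
    (pairs N k).card * (k ^ N - (k - 1) ^ (k - 1) * k ^ (N - k)) ^ s < (k ^ N) ^ s := by
  have hk0 : 0 < k := by omega
  have hN2 : 2 ≤ N := le_trans hk2 hkN
  -- the ℕ-level fact that the "good count" is at most k^N
  have hgle : (k - 1) ^ (k - 1) * k ^ (N - k) ≤ k ^ N := by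
    calc (k - 1) ^ (k - 1) * k ^ (N - k) ≤ k ^ (k - 1) * k ^ (N - k) :=
          Nat.mul_le_mul (Nat.pow_le_pow_left (Nat.sub_le k 1) _) le_rfl
      _ = k ^ ((k - 1) + (N - k)) := (pow_add k _ _).symm
      _ ≤ k ^ N := Nat.pow_le_pow_right (by omega) (by omega)
  -- move to ℝ
  rw [← Nat.cast_lt (α := ℝ)]
  push_cast [Nat.cast_sub hgle]
  set KR : ℝ := (k : ℝ) with hKR
  have hKR2 : (2 : ℝ) ≤ KR := by rw [hKR]; exact_mod_cast hk2
  have hKR1 : (1 : ℝ) < KR := by linarith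
  have hKRm1 : (0 : ℝ) < KR - 1 := by linarith
  have hcast1 : ((k - 1 : ℕ) : ℝ) = KR - 1 := by
    push_cast [Nat.cast_sub (by omega : 1 ≤ k)]; rfl
  rw [hcast1]
  set A : ℝ := KR ^ N with hA
  set G : ℝ := (KR - 1) ^ (k - 1) * KR ^ (N - k) with hG
  have hApos : 0 < A := pow_pos (by linarith) N
  have hGpos : 0 < G := mul_pos (pow_pos hKRm1 _) (pow_pos (by linarith) _)
  have hGA : G ≤ A := by
    have := hgle
    have h' : (((k - 1) ^ (k - 1) * k ^ (N - k) : ℕ) : ℝ) ≤ ((k ^ N : ℕ) : ℝ) := by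
      exact_mod_cast this
    push_cast [hcast1] at h'
    exact h'
  have he1 : (0 : ℝ) < Real.exp 1 := Real.exp_pos 1
  -- Key: KR^(k-1) ≤ e * (KR-1)^(k-1)
  have hkey : KR ^ (k - 1) ≤ Real.exp 1 * (KR - 1) ^ (k - 1) := by
    have hfrac : KR = (KR - 1) * (1 + 1 / (KR - 1)) := by
      field_simp
      ring
    have hle : 1 + 1 / (KR - 1) ≤ Real.exp (1 / (KR - 1)) := by
      have := Real.add_one_le_exp (1 / (KR - 1))
      linarith
    calc KR ^ (k - 1) = (KR - 1) ^ (k - 1) * (1 + 1 / (KR - 1)) ^ (k - 1) := by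
          rw [← mul_pow, ← hfrac]
      _ ≤ (KR - 1) ^ (k - 1) * Real.exp (1 / (KR - 1)) ^ (k - 1) := by
          apply mul_le_mul_of_nonneg_left _ (le_of_lt (pow_pos hKRm1 _))
          apply pow_le_pow_left₀ (by positivity) hle
      _ = (KR - 1) ^ (k - 1) * Real.exp ((k - 1 : ℕ) * (1 / (KR - 1))) := by
          rw [← Real.exp_nat_mul]
      _ = (KR - 1) ^ (k - 1) * Real.exp 1 := by
          rw [hcast1]
          congr 1
          field_simp
      _ = Real.exp 1 * (KR - 1) ^ (k - 1) := by ring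
  -- hence G ≥ A / (e * KR)
  have hGlow : A / (Real.exp 1 * KR) ≤ G := by
    have hAeq : A = KR ^ (N - k) * (KR ^ (k - 1) * KR) := by
      rw [hA, ← pow_succ, ← pow_add]
      congr 1
      omega
    rw [div_le_iff₀ (by positivity)]
    calc A = KR ^ (N - k) * KR ^ (k - 1) * KR := by rw [hAeq]; ring
      _ ≤ KR ^ (N - k) * (Real.exp 1 * (KR - 1) ^ (k - 1)) * KR := by
          apply mul_le_mul_of_nonneg_right _ (by linarith)
          apply mul_le_mul_of_nonneg_left hkey (le_of_lt (pow_pos (by linarith) _))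
      _ = G * (Real.exp 1 * KR) := by rw [hG]; ring
  -- per-trial failure bound
  have hek : (0 : ℝ) < Real.exp 1 * KR := by positivity
  have hstep : A - G ≤ A * Real.exp (-(1 / (Real.exp 1 * KR))) := by
    have h1 : 1 - 1 / (Real.exp 1 * KR) ≤ Real.exp (-(1 / (Real.exp 1 * KR))) := by
      have := Real.add_one_le_exp (-(1 / (Real.exp 1 * KR)))
      linarith
    calc A - G ≤ A - A / (Real.exp 1 * KR) := by linarith
      _ = A * (1 - 1 / (Real.exp 1 * KR)) := by field_simp
      _ ≤ A * Real.exp (-(1 / (Real.exp 1 * KR))) :=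
          mul_le_mul_of_nonneg_left h1 (le_of_lt hApos)
  have hAG0 : (0 : ℝ) ≤ A - G := by linarith
  -- the count of pairs
  have hpairs : ((pairs N k).card : ℝ) ≤ (N : ℝ) ^ (k + 3) := by
    exact_mod_cast card_pairs_le hk0 hkN hN2
  have hlogN : 0 < Real.log N := Real.log_pos (by exact_mod_cast hN2 |>.trans_lt' one_lt_two)
  -- the final exponential comparison
  have hfinal : (N : ℝ) ^ (k + 3) * Real.exp (-(1 / (Real.exp 1 * KR))) ^ s < 1 := by
    rw [← Real.exp_nat_mul]
    have hNpow : (N : ℝ) ^ (k + 3) = Real.exp ((k + 3 : ℕ) * Real.log N) := by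
      rw [Real.exp_nat_mul, Real.exp_log (by positivity)]
    rw [hNpow, ← Real.exp_add]
    rw [show (1 : ℝ) = Real.exp 0 by rw [Real.exp_zero]]
    apply Real.exp_lt_exp.2
    rw [Real.exp_zero] at *
    -- need (k+3) * log N + s * (-(1/(e*k))) < 0, i.e. s > e*k*(k+3)*log N
    have hmain : Real.exp 1 * KR * ((k : ℝ) + 3) * Real.log N < (s : ℝ) := by
      have he : Real.exp 1 < 2.7182818286 := Real.exp_one_lt_d9
      have h9 : Real.exp 1 * KR * ((k : ℝ) + 3) < 9 * KR ^ 2 := by nlinarith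
      calc Real.exp 1 * KR * ((k : ℝ) + 3) * Real.log N
          < 9 * KR ^ 2 * Real.log N := by nlinarith
        _ ≤ (s : ℝ) := hs
    have hc : ((k + 3 : ℕ) : ℝ) = (k : ℝ) + 3 := by push_cast; ring
    have hpos : (0 : ℝ) < Real.exp 1 * KR := by positivity
    have h2 : ((k : ℝ) + 3) * Real.log N < (s : ℝ) / (Real.exp 1 * KR) := by
      rw [lt_div_iff₀ hpos]
      calc ((k : ℝ) + 3) * Real.log N * (Real.exp 1 * KR)
          = Real.exp 1 * KR * ((k : ℝ) + 3) * Real.log N := by ring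
        _ < (s : ℝ) := hmain
    have h3 : (s : ℝ) * -(1 / (Real.exp 1 * KR)) = -((s : ℝ) / (Real.exp 1 * KR)) := by
      ring
    rw [hc, h3]
    linarith
  -- put it together
  calc ((pairs N k).card : ℝ) * (A - G) ^ s
      ≤ (N : ℝ) ^ (k + 3) * (A * Real.exp (-(1 / (Real.exp 1 * KR)))) ^ s := by
        apply mul_le_mul hpairs (pow_le_pow_left₀ hAG0 hstep s) (by positivity) (by positivity)
    _ = ((N : ℝ) ^ (k + 3) * Real.exp (-(1 / (Real.exp 1 * KR))) ^ s) * A ^ s := by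
        rw [mul_pow]; ring
    _ < 1 * A ^ s := by
        apply mul_lt_mul_of_pos_right hfinal (by positivity)
    _ = A ^ s := one_mul _
end SSFaux

/-- A family of subsets of `Fin N` is `(N,k)`-strongly-selective if every nonempty
subset `Z` of size at most `k` and every `z ∈ Z` admit a member of the family whose
intersection with `Z` is exactly `{z}`. -/
def IsStronglySelective (N k : ℕ) {s : ℕ} (S : Fin s → Finset (Fin N)) : Prop :=
  ∀ Z : Finset (Fin N), Z.Nonempty → Z.card ≤ k → ∀ z ∈ Z, ∃ i : Fin s, S i ∩ Z = {z}


/-- For every `2 ≤ k ≤ N` there exists an `(N,k)`-strongly-selective family of size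
at most `C·k²·log N` for some absolute constant `C > 0`. -/
theorem exists_strongly_selective_family :
    ∃ C : ℝ, 0 < C ∧ ∀ N k : ℕ, 2 ≤ k → k ≤ N →
      ∃ (s : ℕ) (S : Fin s → Finset (Fin N)), IsStronglySelective N k S ∧
        (s : ℝ) ≤ C * (k : ℝ) ^ 2 * Real.log N := by
  refine ⟨10, by norm_num, fun N k hk2 hkN => ?_⟩
  have hk0 : 0 < k := by omega
  have hN2 : 2 ≤ N := le_trans hk2 hkN
  set s : ℕ := ⌈9 * (k : ℝ) ^ 2 * Real.log N⌉₊ with hsdef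
  have hlogN : 0 < Real.log N := Real.log_pos (by exact_mod_cast lt_of_lt_of_le one_lt_two hN2)
  have hknn : (0:ℝ) ≤ 9 * (k : ℝ) ^ 2 * Real.log N := by positivity
  have hs : 9 * (k : ℝ) ^ 2 * Real.log N ≤ (s : ℝ) := Nat.le_ceil _
  obtain ⟨ω, hω⟩ := SSFaux.counting (N := N) hk0 hkN (SSFaux.numeric hk2 hkN hs)
  refine ⟨s, fun i => Finset.univ.filter (fun x => ω i x = ⟨0, hk0⟩), ?_, ?_⟩
  · intro Z _ hZk z hz
    exact hω Z hZk z hz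
  · have h1 : (s : ℝ) < 9 * (k : ℝ) ^ 2 * Real.log N + 1 := Nat.ceil_lt_add_one hknn
    have hlog2 : (0.6931471803 : ℝ) < Real.log 2 := Real.log_two_gt_d9
    have hlogN' : Real.log 2 ≤ Real.log N := by
      apply Real.log_le_log (by norm_num)
      exact_mod_cast hN2
    have hkR : (2 : ℝ) ≤ (k : ℝ) := by exact_mod_cast hk2
    nlinarith [sq_nonneg ((k:ℝ) - 2)]
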